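/- For every number of bidders n ≥ 1 and every binary symmetric instance (valuations v_i(s) = f_i(∑_j s_j) with each f_i : {0,...,n} → ℝ nonnegative and weakly increasing), there exists a mechanism (x, p) that is ex-post incentive compatible and ex-post individually rational and whose revenue 10-approximates the optimal welfare, i.e., for every signal profile s, ∑_i p_i(s) ≥ (1/10)·max_i v_i(s). -/

import Mathlib

/-- For every `n ≥ 1` and every binary symmetric instance, there exists
an ex-post IC and ex-post IR mechanism `(x, p)` whose revenue 10-approximates the
optimal welfare: for every signal profile `s`, `∑ i, p s i ≥ (1/10) * max_i v i s`. -/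
theorem binary_symmetric_revenue_ten_approx
    (n : ℕ) (hn : 1 ≤ n)
    (f : Fin n → ℕ → ℝ)
    (hf_nonneg : ∀ i m, 0 ≤ f i m)
    (hf_mono : ∀ i, Monotone (f i))
    (v : Fin n → (Fin n → Fin 2) → ℝ)
    (hv : ∀ i s, v i s = f i (∑ j, (s j : ℕ))) :
    ∃ x p : (Fin n → Fin 2) → Fin n → ℝ,
      (∀ s i, 0 ≤ x s i) ∧ (∀ s, ∑ i, x s i ≤ 1) ∧
      (∀ s i, 0 ≤ p s i) ∧
      (∀ (i : Fin n) (s : Fin n → Fin 2) (t : Fin 2),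
        x s i * v i s - p s i ≥
          x (Function.update s i t) i * v i s - p (Function.update s i t) i) ∧
      (∀ (i : Fin n) (s : Fin n → Fin 2), x s i * v i s - p s i ≥ 0) ∧
      (∀ s : Fin n → Fin 2,
        ∑ i, p s i ≥
          (1 / 10) * Finset.univ.sup' ⟨⟨0, hn⟩, Finset.mem_univ _⟩ (fun i => v i s)) := by
  classical
  have two : ∀ t : Fin 2, t = 0 ∨ t = 1 := by decide
  obtain ⟨w, hw⟩ : ∃ w : ℕ → Fin n, ∀ m j, f j m ≤ f (w m) m := by
    have h : ∀ m : ℕ, ∃ i : Fin n, ∀ j : Fin n, f j m ≤ f i m := by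
      intro m
      obtain ⟨i, -, hi⟩ := Finset.exists_max_image Finset.univ (fun i => f i m)
        ⟨⟨0, hn⟩, Finset.mem_univ _⟩
      exact ⟨i, fun j => hi j (Finset.mem_univ j)⟩
    exact ⟨fun m => (h m).choose, fun m => (h m).choose_spec⟩
  set A : Fin n → ℕ → ℝ := fun i m => if i = w m then (1:ℝ)/4 else 0 with hA
  have hA_nonneg : ∀ i m, 0 ≤ A i m := by
    intro i m; simp only [hA]; split <;> norm_num
  set c : (Fin n → Fin 2) → Fin n → ℕ := fun s i => ∑ j, if j = i then 0 else (s j : ℕ)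
    with hc
  have hcs : ∀ (s : Fin n → Fin 2) (i : Fin n), c s i + ((s i : ℕ)) = ∑ j, ((s j : ℕ)) := by
    intro s i
    have h1 : ∑ j, ((s j : ℕ))
        = ∑ j, ((if j = i then 0 else (s j : ℕ)) + (if j = i then (s i : ℕ) else 0)) := by
      apply Finset.sum_congr rfl
      intro j _
      by_cases h : j = i <;> simp [h]
    rw [h1, Finset.sum_add_distrib]
    simp [hc, Finset.sum_ite_eq']
  have hc_update : ∀ (s : Fin n → Fin 2) (i : Fin n) (t : Fin 2),
      c (Function.update s i t) i = c s i := by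
    intro s i t
    simp only [hc]
    apply Finset.sum_congr rfl
    intro j _
    by_cases h : j = i <;> simp [h, Function.update_of_ne]
  refine ⟨fun s i => A i (c s i) + (if s i = 0 then 0 else A i (c s i + 1)),
      fun s i => A i (c s i) * f i (c s i)
        + (if s i = 0 then 0 else A i (c s i + 1) * f i (c s i + 1)),
      ?_, ?_, ?_, ?_, ?_, ?_⟩
  · -- x nonneg
    intro s i
    have h1 := hA_nonneg i (c s i)
    have h2 := hA_nonneg i (c s i + 1)
    by_cases h : s i = 0 <;> simp [h] <;> linarith
  · -- feasibility
    intro s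
    have key : ∀ i : Fin n,
        (A i (c s i) + (if s i = 0 then 0 else A i (c s i + 1)))
          ≤ (if i = w (∑ j, ((s j : ℕ))) then (1:ℝ)/4 else 0)
            + (if i = w ((∑ j, ((s j : ℕ))) - 1) then (1:ℝ)/4 else 0) := by
      intro i
      by_cases h : s i = 0
      · have h0 : (s i : ℕ) = 0 := by simp [h]
        have hm : c s i = ∑ j, ((s j : ℕ)) := by
          have := hcs s i; omega
        rw [hm]
        simp only [h, if_true, add_zero, hA]
        split <;> split <;> norm_num
      · have h1 : (s i : ℕ) = 1 := by
          rcases two (s i) with h' | h'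
          · exact absurd h' h
          · simp [h']
        have hm1 : c s i + 1 = ∑ j, ((s j : ℕ)) := by
          have := hcs s i; omega
        have hm : c s i = (∑ j, ((s j : ℕ))) - 1 := by omega
        rw [hm1, hm]
        simp only [h, if_false, hA]
        split <;> split <;> norm_num
    calc ∑ i, (A i (c s i) + (if s i = 0 then 0 else A i (c s i + 1)))
        ≤ ∑ i : Fin n, ((if i = w (∑ j, ((s j : ℕ))) then (1:ℝ)/4 else 0)
            + (if i = w ((∑ j, ((s j : ℕ))) - 1) then (1:ℝ)/4 else 0)) :=
          Finset.sum_le_sum (fun i _ => key i)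
      _ ≤ 1 := by
          rw [Finset.sum_add_distrib]
          simp [Finset.sum_ite_eq']
          norm_num
  · -- p nonneg
    intro s i
    have h1 := mul_nonneg (hA_nonneg i (c s i)) (hf_nonneg i (c s i))
    have h2 := mul_nonneg (hA_nonneg i (c s i + 1)) (hf_nonneg i (c s i + 1))
    by_cases h : s i = 0 <;> simp [h] <;> linarith
  · -- IC
    intro i s t
    have hval : v i s = f i (c s i + ((s i : ℕ))) := by rw [hv, hcs]
    have hcu := hc_update s i t
    simp only [hcu, Function.update_self]
    rcases two (s i) with h | h <;> rcases two t with h' | h' <;>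
      simp [h, h', hval] <;>
      nlinarith [hA_nonneg i (c s i), hA_nonneg i (c s i + 1),
        hf_mono i (Nat.le_succ (c s i))]
  · -- IR
    intro i s
    have hval : v i s = f i (c s i + ((s i : ℕ))) := by rw [hv, hcs]
    rcases two (s i) with h | h <;>
      simp [h, hval] <;>
      nlinarith [hA_nonneg i (c s i), hA_nonneg i (c s i + 1),
        hf_mono i (Nat.le_succ (c s i))]
  · -- revenue
    intro s
    have hsup : Finset.univ.sup' ⟨⟨0, hn⟩, Finset.mem_univ _⟩ (fun i => v i s)
        ≤ f (w (∑ j, ((s j : ℕ)))) (∑ j, ((s j : ℕ))) := by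
      apply Finset.sup'_le
      intro j _
      rw [hv]
      exact hw _ j
    set i0 := w (∑ j, ((s j : ℕ))) with hi0
    have hpay : (1/4 : ℝ) * f i0 (∑ j, ((s j : ℕ)))
        ≤ A i0 (c s i0) * f i0 (c s i0)
          + (if s i0 = 0 then 0 else A i0 (c s i0 + 1) * f i0 (c s i0 + 1)) := by
      rcases two (s i0) with h | h
      · have h0 : (s i0 : ℕ) = 0 := by simp [h]
        have hm : c s i0 = ∑ j, ((s j : ℕ)) := by
          have := hcs s i0; omega
        rw [hm, if_pos h]
        simp only [h, if_true, add_zero, hm, hA, hi0, if_pos rfl]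
        linarith
      · have h1 : (s i0 : ℕ) = 1 := by
          rcases two (s i0) with h' | h'
          · simp [h'] at h
          · simp [h']
        have hm1 : c s i0 + 1 = ∑ j, ((s j : ℕ)) := by
          have := hcs s i0; omega
        have hAv : A i0 (c s i0 + 1) = 1/4 := by
          rw [hm1, hA]; simp [hi0]
        rw [if_neg (by simp [h] : ¬ s i0 = 0), hAv, hm1]
        have := mul_nonneg (hA_nonneg i0 (c s i0)) (hf_nonneg i0 (c s i0))
        linarith
    have hsum : A i0 (c s i0) * f i0 (c s i0)
          + (if s i0 = 0 then 0 else A i0 (c s i0 + 1) * f i0 (c s i0 + 1))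
        ≤ ∑ i, (A i (c s i) * f i (c s i)
          + (if s i = 0 then 0 else A i (c s i + 1) * f i (c s i + 1))) := by
      apply Finset.single_le_sum (f := fun i => A i (c s i) * f i (c s i)
        + (if s i = 0 then 0 else A i (c s i + 1) * f i (c s i + 1)))
        (fun i _ => ?_) (Finset.mem_univ i0)
      have h1 := mul_nonneg (hA_nonneg i (c s i)) (hf_nonneg i (c s i))
      have h2 := mul_nonneg (hA_nonneg i (c s i + 1)) (hf_nonneg i (c s i + 1))
      by_cases h : s i = 0 <;> simp [h] <;> linarith
    have hfn := hf_nonneg i0 (∑ j, ((s j : ℕ)))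
    have h110 : (1/10 : ℝ) * Finset.univ.sup' ⟨⟨0, hn⟩, Finset.mem_univ _⟩ (fun i => v i s)
        ≤ (1/10 : ℝ) * f i0 (∑ j, ((s j : ℕ))) := by
      apply mul_le_mul_of_nonneg_left hsup
      norm_num
    calc (1/10 : ℝ) * Finset.univ.sup' ⟨⟨0, hn⟩, Finset.mem_univ _⟩ (fun i => v i s)
        ≤ (1/10 : ℝ) * f i0 (∑ j, ((s j : ℕ))) := h110
      _ ≤ (1/4 : ℝ) * f i0 (∑ j, ((s j : ℕ))) := by linarith
      _ ≤ _ := le_trans hpay hsum
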